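/- Let A be an algebra graded by a finite group G, and let M, N be finite dimensional graded left A-modules with M graded indecomposable. If M ≅ N as (ungraded) A-modules, then M ≅ N(σ) as graded A-modules for some σ ∈ G. -/
import Mathlib

open DirectSum LinearMap Finset

section proj

variable {k : Type*} [Semiring k] {G : Type*} [DecidableEq G]
  {M : Type*} [AddCommMonoid M] [Module k M] (ℳ : G → Submodule k M)
  (hM : DirectSum.IsInternal ℳ)

/-- Projection onto the `g`-th graded piece. -/
noncomputable def gproj (g : G) : M →ₗ[k] M :=
  (ℳ g).subtype ∘ₗ (DFinsupp.lapply g) ∘ₗ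
    (LinearEquiv.ofBijective (DirectSum.coeLinearMap ℳ) hM).symm.toLinearMap

lemma gproj_apply (g : G) (m : M) :
    gproj ℳ hM g m
      = ((LinearEquiv.ofBijective (DirectSum.coeLinearMap ℳ) hM).symm m g : M) := rfl

lemma gproj_mem (g : G) (m : M) : gproj ℳ hM g m ∈ ℳ g := by
  rw [gproj_apply]; exact Subtype.coe_prop _

lemma gproj_of_mem {g g' : G} {m : M} (hm : m ∈ ℳ g') :
    gproj ℳ hM g m = if g = g' then m else 0 := by
  rw [gproj_apply]
  by_cases h : g = g'
  · subst h
    rw [if_pos rfl, hM.ofBijective_coeLinearMap_of_mem hm]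
  · rw [if_neg h, hM.ofBijective_coeLinearMap_of_mem_ne (fun e => h e.symm) hm]
    rfl

lemma gproj_sum [Fintype G] (m : M) : ∑ g, gproj ℳ hM g m = m := by
  set e := LinearEquiv.ofBijective (DirectSum.coeLinearMap ℳ) hM with he
  have h1 : ∀ g : G, gproj ℳ hM g m = DirectSum.coeLinearMap ℳ
      (DirectSum.of (fun g => ℳ g) g ((e.symm m) g)) := by
    intro g; rw [gproj_apply, DirectSum.coeLinearMap_of]
  calc ∑ g, gproj ℳ hM g m
      = ∑ g, DirectSum.coeLinearMap ℳ (DirectSum.of (fun g => ℳ g) g ((e.symm m) g)) := by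
        exact Finset.sum_congr rfl fun g _ => h1 g
    _ = DirectSum.coeLinearMap ℳ (∑ g, DirectSum.of (fun g => ℳ g) g ((e.symm m) g)) := by
        rw [map_sum]
    _ = DirectSum.coeLinearMap ℳ (e.symm m) := by rw [DirectSum.sum_univ_of]
    _ = m := by
        have : DirectSum.coeLinearMap ℳ (e.symm m) = e (e.symm m) := rfl
        rw [this, e.apply_symm_apply]

lemma gproj_gproj (g g' : G) (m : M) :
    gproj ℳ hM g (gproj ℳ hM g' m) = if g = g' then gproj ℳ hM g' m else 0 :=
  gproj_of_mem ℳ hM (gproj_mem ℳ hM g' m)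

/-- A degree-preserving map commutes with the projections. -/
lemma gproj_comm [Fintype G] {w : M →ₗ[k] M} (hw : ∀ g : G, ∀ m ∈ ℳ g, w m ∈ ℳ g)
    (g : G) (m : M) : gproj ℳ hM g (w m) = w (gproj ℳ hM g m) := by
  conv_lhs => rw [← gproj_sum ℳ hM m]
  rw [map_sum, map_sum]
  rw [Finset.sum_congr rfl fun g' _ =>
    gproj_of_mem ℳ hM (hw g' _ (gproj_mem ℳ hM g' m))]
  rw [Finset.sum_ite_eq Finset.univ g fun g' => w (gproj ℳ hM g' m),
    if_pos (Finset.mem_univ g)]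

end proj

section comp

variable {k A : Type*} [Field k] [Ring A] [Algebra k A]
  {G : Type*} [Group G] [Fintype G] [DecidableEq G]
  {P Q : Type*}
  [AddCommGroup P] [Module k P] [Module A P] [IsScalarTower k A P]
  [AddCommGroup Q] [Module k Q] [Module A Q] [IsScalarTower k A Q]

/-- The action of a homogeneous element interacts with projections. -/
lemma gproj_smul (𝒜 : G → Submodule k A) (SP : G → Submodule k P)
    (hP : DirectSum.IsInternal SP)
    (hPact : ∀ {g h : G}, ∀ a ∈ 𝒜 g, ∀ m ∈ SP h, a • m ∈ SP (g * h))
    {h : G} {a : A} (ha : a ∈ 𝒜 h) (g : G) (m : P) :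
    gproj SP hP g (a • m) = a • gproj SP hP (h⁻¹ * g) m := by
  calc gproj SP hP g (a • m)
      = ∑ g', gproj SP hP g (a • gproj SP hP g' m) := by
        conv_lhs => rw [← gproj_sum SP hP m]
        rw [Finset.smul_sum, map_sum]
    _ = ∑ g', a • gproj SP hP (h⁻¹ * g) (gproj SP hP g' m) := by
        refine Finset.sum_congr rfl fun g' _ => ?_
        rw [gproj_of_mem SP hP (hPact a ha _ (gproj_mem SP hP g' m)),
          gproj_gproj]
        by_cases hgg : h⁻¹ * g = g'
        · rw [if_pos hgg, if_pos]; rw [← hgg, mul_inv_cancel_left]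
        · rw [if_neg hgg, if_neg, smul_zero]
          intro e; exact hgg (by rw [e, inv_mul_cancel_left])
    _ = a • gproj SP hP (h⁻¹ * g) m := by
        rw [← Finset.smul_sum, ← map_sum, gproj_sum]

/-- The `σ`-component of a map between graded modules. -/
noncomputable def gcomp (SP : G → Submodule k P) (SQ : G → Submodule k Q)
    (hP : DirectSum.IsInternal SP) (hQ : DirectSum.IsInternal SQ)
    (f0 : P →ₗ[k] Q) (σ : G) : P →ₗ[k] Q :=
  ∑ g : G, (gproj SQ hQ (g * σ)) ∘ₗ (f0 ∘ₗ (gproj SP hP g))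

lemma gcomp_apply (SP : G → Submodule k P) (SQ : G → Submodule k Q)
    (hP : DirectSum.IsInternal SP) (hQ : DirectSum.IsInternal SQ)
    (f0 : P →ₗ[k] Q) (σ : G) (m : P) :
    gcomp SP SQ hP hQ f0 σ m = ∑ g : G, gproj SQ hQ (g * σ) (f0 (gproj SP hP g m)) := by
  simp [gcomp, LinearMap.sum_apply, LinearMap.comp_apply]

lemma gcomp_mem (SP : G → Submodule k P) (SQ : G → Submodule k Q)
    (hP : DirectSum.IsInternal SP) (hQ : DirectSum.IsInternal SQ)
    (f0 : P →ₗ[k] Q) (σ : G) {g : G} {m : P} (hm : m ∈ SP g) :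
    gcomp SP SQ hP hQ f0 σ m ∈ SQ (g * σ) := by
  rw [gcomp_apply]
  refine Submodule.sum_mem _ fun g' _ => ?_
  rcases eq_or_ne g' g with rfl | hne
  · exact gproj_mem SQ hQ _ _
  · rw [gproj_of_mem SP hP hm, if_neg hne, map_zero, map_zero]
    exact Submodule.zero_mem _

lemma gcomp_smul (𝒜 : G → Submodule k A) (hA : DirectSum.IsInternal 𝒜)
    (SP : G → Submodule k P) (SQ : G → Submodule k Q)
    (hP : DirectSum.IsInternal SP) (hQ : DirectSum.IsInternal SQ)
    (hPact : ∀ {g h : G}, ∀ a ∈ 𝒜 g, ∀ m ∈ SP h, a • m ∈ SP (g * h))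
    (hQact : ∀ {g h : G}, ∀ a ∈ 𝒜 g, ∀ m ∈ SQ h, a • m ∈ SQ (g * h))
    (f0 : P →ₗ[k] Q) (hf0 : ∀ (a : A) (p : P), f0 (a • p) = a • f0 p)
    (σ : G) (a : A) (m : P) :
    gcomp SP SQ hP hQ f0 σ (a • m) = a • gcomp SP SQ hP hQ f0 σ m := by
  have hhom : ∀ (h : G), ∀ a ∈ 𝒜 h,
      gcomp SP SQ hP hQ f0 σ (a • m) = a • gcomp SP SQ hP hQ f0 σ m := by
    intro h a ha
    rw [gcomp_apply, gcomp_apply, Finset.smul_sum]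
    refine Fintype.sum_equiv (Equiv.mulLeft h⁻¹) _ _ fun g => ?_
    simp only [Equiv.coe_mulLeft]
    rw [gproj_smul 𝒜 SP hP hPact ha, hf0,
      gproj_smul 𝒜 SQ hQ hQact ha, mul_assoc]
  calc gcomp SP SQ hP hQ f0 σ (a • m)
      = gcomp SP SQ hP hQ f0 σ ((∑ h, gproj 𝒜 hA h a) • m) := by rw [gproj_sum]
    _ = ∑ h, gcomp SP SQ hP hQ f0 σ ((gproj 𝒜 hA h a) • m) := by
        rw [Finset.sum_smul, map_sum]
    _ = ∑ h, (gproj 𝒜 hA h a) • gcomp SP SQ hP hQ f0 σ m :=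
        Finset.sum_congr rfl fun h _ => hhom h _ (gproj_mem 𝒜 hA h a)
    _ = a • gcomp SP SQ hP hQ f0 σ m := by rw [← Finset.sum_smul, gproj_sum]

lemma gproj_gcomp (SP : G → Submodule k P) (SQ : G → Submodule k Q)
    (hP : DirectSum.IsInternal SP) (hQ : DirectSum.IsInternal SQ)
    (f0 : P →ₗ[k] Q) (σ h : G) (m : P) :
    gproj SQ hQ h (gcomp SP SQ hP hQ f0 σ m)
      = gproj SQ hQ h (f0 (gproj SP hP (h * σ⁻¹) m)) := by
  rw [gcomp_apply, map_sum]
  rw [Finset.sum_eq_single (h * σ⁻¹)]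
  · rw [inv_mul_cancel_right,
      gproj_of_mem SQ hQ (gproj_mem SQ hQ h (f0 (gproj SP hP (h * σ⁻¹) m))),
      if_pos rfl]
  · intro g _ hg
    rw [gproj_gproj, if_neg, ]
    intro e
    exact hg (by rw [e, mul_inv_cancel_right])
  · intro hh; exact absurd (Finset.mem_univ _) hh

lemma sum_gcomp (SP : G → Submodule k P) (SQ : G → Submodule k Q)
    (hP : DirectSum.IsInternal SP) (hQ : DirectSum.IsInternal SQ)
    (f0 : P →ₗ[k] Q) (f1 : Q →ₗ[k] P) (h10 : ∀ p, f1 (f0 p) = p) (m : P) :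
    ∑ σ : G, gcomp SQ SP hQ hP f1 σ⁻¹ (gcomp SP SQ hP hQ f0 σ m) = m := by
  have step1 : ∀ σ : G, gcomp SQ SP hQ hP f1 σ⁻¹ (gcomp SP SQ hP hQ f0 σ m)
      = ∑ g : G, gproj SP hP g (f1 (gproj SQ hQ (g * σ) (f0 (gproj SP hP g m)))) := by
    intro σ
    rw [gcomp_apply]
    refine Fintype.sum_equiv (Equiv.mulRight σ⁻¹) _ _ fun h => ?_
    simp only [Equiv.coe_mulRight]
    rw [inv_mul_cancel_right, gproj_gcomp SP SQ hP hQ f0 σ h m]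
  rw [Finset.sum_congr rfl fun σ _ => step1 σ, Finset.sum_comm]
  have step2 : ∀ g : G,
      ∑ σ : G, gproj SP hP g (f1 (gproj SQ hQ (g * σ) (f0 (gproj SP hP g m))))
        = gproj SP hP g m := by
    intro g
    rw [← map_sum, ← map_sum]
    have hinner : ∑ σ : G, gproj SQ hQ (g * σ) (f0 (gproj SP hP g m))
        = f0 (gproj SP hP g m) := by
      exact (Fintype.sum_equiv (Equiv.mulLeft g)
        (fun σ => gproj SQ hQ (g * σ) (f0 (gproj SP hP g m)))
        (fun τ => gproj SQ hQ τ (f0 (gproj SP hP g m)))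
        (fun σ => by simp only [Equiv.coe_mulLeft])).trans (gproj_sum SQ hQ _)
    rw [hinner, h10, gproj_of_mem SP hP (gproj_mem SP hP g m), if_pos rfl]
  rw [Finset.sum_congr rfl fun g _ => step2 g, gproj_sum]

end comp

/-- let `A` be an algebra graded by a finite group `G`, and let `M`, `N`
be finite dimensional graded left `A`-modules with `M` graded indecomposable (no
nontrivial decomposition into two graded submodules).  If `M ≅ N` as ungraded
`A`-modules, then `M ≅ N(σ)` as graded `A`-modules for some `σ ∈ G`, where
`N(σ)_g = N_{gσ}`. -/
theorem gradedIndecomposable_iso_suspension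
    {k A : Type*} [Field k] [Ring A] [Algebra k A]
    {G : Type*} [Group G] [Finite G] [DecidableEq G]
    (𝒜 : G → Submodule k A)
    (hinternal : DirectSum.IsInternal 𝒜)
    (hone : (1 : A) ∈ 𝒜 1)
    (hmul : ∀ {g h : G}, ∀ a ∈ 𝒜 g, ∀ b ∈ 𝒜 h, a * b ∈ 𝒜 (g * h))
    {M N : Type*}
    [AddCommGroup M] [Module k M] [Module A M] [IsScalarTower k A M]
    [AddCommGroup N] [Module k N] [Module A N] [IsScalarTower k A N]
    [FiniteDimensional k M] [FiniteDimensional k N]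
    (ℳ : G → Submodule k M) (𝒩 : G → Submodule k N)
    (hMinternal : DirectSum.IsInternal ℳ) (hNinternal : DirectSum.IsInternal 𝒩)
    (hMact : ∀ {g h : G}, ∀ a ∈ 𝒜 g, ∀ m ∈ ℳ h, a • m ∈ ℳ (g * h))
    (hNact : ∀ {g h : G}, ∀ a ∈ 𝒜 g, ∀ n ∈ 𝒩 h, a • n ∈ 𝒩 (g * h))
    (hindec : ∀ P Q : Submodule A M,
      (P.restrictScalars k = ⨆ g : G, P.restrictScalars k ⊓ ℳ g) →
      (Q.restrictScalars k = ⨆ g : G, Q.restrictScalars k ⊓ ℳ g) →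
      IsCompl P Q → P = ⊥ ∨ Q = ⊥)
    (hiso : Nonempty (M ≃ₗ[A] N)) :
    ∃ (σ : G) (e : M ≃ₗ[A] N), ∀ g : G, ∀ m ∈ ℳ g, e m ∈ 𝒩 (g * σ) := by
  obtain ⟨inst⟩ := nonempty_fintype G
  obtain ⟨f⟩ := hiso
  set fk : M →ₗ[k] N := LinearMap.restrictScalars k f.toLinearMap with hfkdef
  set fk' : N →ₗ[k] M := LinearMap.restrictScalars k f.symm.toLinearMap with hfk'def
  have hfkA : ∀ (a : A) (m : M), fk (a • m) = a • fk m := fun a m => f.map_smul a m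
  have hfk'A : ∀ (a : A) (n : N), fk' (a • n) = a • fk' n := fun a n => f.symm.map_smul a n
  have h10 : ∀ m : M, fk' (fk m) = m := fun m => f.symm_apply_apply m
  set F : G → (M →ₗ[k] N) := fun σ => gcomp ℳ 𝒩 hMinternal hNinternal fk σ with hFdef
  set Gc : G → (N →ₗ[k] M) := fun σ => gcomp 𝒩 ℳ hNinternal hMinternal fk' σ⁻¹ with hGcdef
  set u : G → Module.End k M := fun σ => (Gc σ) ∘ₗ (F σ) with hudef
  have huA : ∀ σ (a : A) (m : M), u σ (a • m) = a • u σ m := by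
    intro σ a m
    show Gc σ (F σ (a • m)) = a • Gc σ (F σ m)
    rw [show F σ (a • m) = a • F σ m from
      gcomp_smul 𝒜 hinternal ℳ 𝒩 hMinternal hNinternal hMact hNact fk hfkA σ a m]
    exact gcomp_smul 𝒜 hinternal 𝒩 ℳ hNinternal hMinternal hNact hMact fk' hfk'A σ⁻¹ a _
  have hudeg : ∀ σ (g : G), ∀ m ∈ ℳ g, u σ m ∈ ℳ g := by
    intro σ g m hm
    have h1 : F σ m ∈ 𝒩 (g * σ) := gcomp_mem ℳ 𝒩 hMinternal hNinternal fk σ hm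
    have h2 : Gc σ (F σ m) ∈ ℳ (g * σ * σ⁻¹) :=
      gcomp_mem 𝒩 ℳ hNinternal hMinternal fk' σ⁻¹ h1
    rwa [mul_inv_cancel_right] at h2
  have husum : ∀ m : M, ∑ σ : G, u σ m = m := fun m =>
    sum_gcomp ℳ 𝒩 hMinternal hNinternal fk fk' h10 m
  -- dichotomy: a graded `A`-linear endomorphism is bijective or nilpotent
  have dich : ∀ w : Module.End k M, (∀ (a : A) (m : M), w (a • m) = a • w m) →
      (∀ g : G, ∀ m ∈ ℳ g, w m ∈ ℳ g) →
      Function.Bijective w ∨ IsNilpotent w := by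
    intro w hwA hwdeg
    obtain ⟨n0, hn0⟩ := Filter.eventually_atTop.mp w.eventually_isCompl_ker_pow_range_pow
    set n := n0 + 1 with hn
    have hcompl := hn0 n (Nat.le_succ n0)
    have hwnA : ∀ (a : A) (m : M), (w ^ n) (a • m) = a • (w ^ n) m := by
      have : ∀ (j : ℕ) (a : A) (m : M), (w ^ j) (a • m) = a • (w ^ j) m := by
        intro j
        induction j with
        | zero => intro a m; simp
        | succ j ih =>
            intro a m
            rw [pow_succ, Module.End.mul_apply, Module.End.mul_apply, hwA, ih]
      exact this n
    have hwndeg : ∀ g : G, ∀ m ∈ ℳ g, (w ^ n) m ∈ ℳ g := by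
      have : ∀ (j : ℕ) (g : G), ∀ m ∈ ℳ g, (w ^ j) m ∈ ℳ g := by
        intro j
        induction j with
        | zero => intro g m hm; simpa using hm
        | succ j ih =>
            intro g m hm
            rw [pow_succ, Module.End.mul_apply]
            exact ih g _ (hwdeg g m hm)
      exact this n
    set w' : M →ₗ[A] M :=
      { toFun := ⇑(w ^ n), map_add' := fun x y => map_add _ x y,
        map_smul' := fun a m => hwnA a m } with hw'def
    have hgradP : (LinearMap.ker w').restrictScalars k
        = ⨆ g : G, (LinearMap.ker w').restrictScalars k ⊓ ℳ g := by
      refine le_antisymm ?_ (iSup_le fun g => inf_le_left)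
      intro x hx
      have hx0 : (w ^ n) x = 0 := hx
      have hmem : ∀ g : G, gproj ℳ hMinternal g x
          ∈ (LinearMap.ker w').restrictScalars k ⊓ ℳ g := by
        intro g
        refine Submodule.mem_inf.mpr ⟨?_, gproj_mem ℳ hMinternal g x⟩
        show (w ^ n) (gproj ℳ hMinternal g x) = 0
        rw [← gproj_comm ℳ hMinternal hwndeg g x, hx0, map_zero]
      rw [← gproj_sum ℳ hMinternal x]
      exact Submodule.sum_mem _ fun g _ => Submodule.mem_iSup_of_mem g (hmem g)
    have hgradQ : (LinearMap.range w').restrictScalars k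
        = ⨆ g : G, (LinearMap.range w').restrictScalars k ⊓ ℳ g := by
      refine le_antisymm ?_ (iSup_le fun g => inf_le_left)
      intro x hx
      obtain ⟨y, hy⟩ := hx
      have hmem : ∀ g : G, gproj ℳ hMinternal g x
          ∈ (LinearMap.range w').restrictScalars k ⊓ ℳ g := by
        intro g
        refine Submodule.mem_inf.mpr ⟨⟨gproj ℳ hMinternal g y, ?_⟩,
          gproj_mem ℳ hMinternal g x⟩
        show (w ^ n) (gproj ℳ hMinternal g y) = gproj ℳ hMinternal g x
        rw [← gproj_comm ℳ hMinternal hwndeg g y, show (w ^ n) y = x from hy]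
      rw [← gproj_sum ℳ hMinternal x]
      exact Submodule.sum_mem _ fun g _ => Submodule.mem_iSup_of_mem g (hmem g)
    have hcompl' : IsCompl (LinearMap.ker w') (LinearMap.range w') := by
      constructor
      · rw [disjoint_iff]
        refine (Submodule.eq_bot_iff _).mpr fun x hx => ?_
        have h1 : x ∈ LinearMap.ker (w ^ n) := (Submodule.mem_inf.mp hx).1
        have h2 : x ∈ LinearMap.range (w ^ n) := by
          obtain ⟨y, hy⟩ := (Submodule.mem_inf.mp hx).2
          exact ⟨y, hy⟩
        exact (Submodule.disjoint_def.mp hcompl.disjoint) x h1 h2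
      · rw [codisjoint_iff]
        refine Submodule.eq_top_iff'.mpr fun x => ?_
        have hx : x ∈ LinearMap.ker (w ^ n) ⊔ LinearMap.range (w ^ n) := by
          rw [hcompl.codisjoint.eq_top]; trivial
        obtain ⟨p, hp, q, hq, rfl⟩ := Submodule.mem_sup.mp hx
        refine Submodule.mem_sup.mpr ⟨p, hp, q, ?_, rfl⟩
        obtain ⟨y, hy⟩ := hq
        exact ⟨y, hy⟩
    rcases hindec (LinearMap.ker w') (LinearMap.range w') hgradP hgradQ hcompl'
      with hP0 | hQ0
    · left
      have hninj : Function.Injective ⇑(w ^ n) := by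
        intro x y hxy
        have hsub : x - y ∈ LinearMap.ker w' := by
          show (w ^ n) (x - y) = 0
          rw [map_sub, hxy, sub_self]
        rw [hP0, Submodule.mem_bot] at hsub
        exact sub_eq_zero.mp hsub
      have hinj : Function.Injective ⇑w := by
        intro x y hxy
        apply hninj
        show (w ^ n) x = (w ^ n) y
        rw [hn, pow_succ, Module.End.mul_apply, Module.End.mul_apply, hxy]
      have hsurj : Function.Surjective ⇑w := LinearMap.injective_iff_surjective.mp hinj
      exact ⟨hinj, hsurj⟩
    · right
      refine ⟨n, ?_⟩
      ext x
      have hx : (w ^ n) x ∈ LinearMap.range w' := ⟨x, rfl⟩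
      rw [hQ0, Submodule.mem_bot] at hx
      simpa using hx
  -- existence of a bijective component
  have hexists : ∃ σ : G, Function.Bijective (u σ) := by
    by_contra hno
    push_neg at hno
    have hnil : ∀ σ, IsNilpotent (u σ) := fun σ =>
      (dich (u σ) (huA σ) (hudeg σ)).resolve_left (hno σ)
    have hnontriv : Nontrivial M := by
      rcases subsingleton_or_nontrivial M with hs | hn
      · have hb1 : Function.Bijective ⇑(u 1) :=
          ⟨fun a b _ => Subsingleton.elim a b, fun b => ⟨b, Subsingleton.elim _ _⟩⟩
        exact absurd hb1 (hno 1)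
      · exact hn
    have nil_inj : ∀ z : Module.End k M, IsNilpotent z →
        Function.Injective ⇑z → False := by
      rintro z ⟨j, hj⟩ hzi
      have hinjj : Function.Injective ⇑(z ^ j) := by
        have he : ⇑(z ^ j) = (⇑z)^[j] := funext fun m => Module.End.pow_apply z j m
        rw [he]
        exact Function.Injective.iterate hzi j
      rw [hj] at hinjj
      obtain ⟨a, b, hab⟩ := hnontriv
      exact hab (hinjj (by simp))
    set p : Module.End k M → Prop := fun z =>
      ((∀ (a : A) (m : M), z (a • m) = a • z m) ∧ (∀ g : G, ∀ m ∈ ℳ g, z m ∈ ℳ g))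
        ∧ IsNilpotent z with hpdef
    have hadd : ∀ x y, p x → p y → p (x + y) := by
      rintro x y ⟨⟨hxA, hxD⟩, hxN⟩ ⟨⟨hyA, hyD⟩, hyN⟩
      have hxyA : ∀ (a : A) (m : M), (x + y) (a • m) = a • (x + y) m := by
        intro a m
        rw [LinearMap.add_apply, LinearMap.add_apply, hxA, hyA, smul_add]
      have hxyD : ∀ g : G, ∀ m ∈ ℳ g, (x + y) m ∈ ℳ g := by
        intro g m hm
        rw [LinearMap.add_apply]
        exact Submodule.add_mem _ (hxD g m hm) (hyD g m hm)
      refine ⟨⟨hxyA, hxyD⟩, ?_⟩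
      rcases dich (x + y) hxyA hxyD with hbij | hnl
      swap
      · exact hnl
      exfalso
      set eqv := LinearEquiv.ofBijective (x + y : M →ₗ[k] M) hbij with heqv
      set v : Module.End k M := eqv.symm.toLinearMap with hvdef
      have hv1 : ∀ m, v ((x + y) m) = m := fun m => eqv.symm_apply_apply m
      have hv2 : ∀ m, (x + y) (v m) = m := fun m => eqv.apply_symm_apply m
      have hvA : ∀ (a : A) (m : M), v (a • m) = a • v m := by
        intro a m
        conv_lhs => rw [← hv2 m]
        rw [← hxyA]
        exact hv1 _
      have hvD : ∀ g : G, ∀ m ∈ ℳ g, v m ∈ ℳ g := by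
        intro g m hm
        have h1 : (x + y) (gproj ℳ hMinternal g (v m)) = (x + y) (v m) := by
          rw [← gproj_comm ℳ hMinternal hxyD g (v m), hv2,
            gproj_of_mem ℳ hMinternal hm, if_pos rfl]
        have h2 := hbij.injective h1
        rw [← h2]
        exact gproj_mem ℳ hMinternal g (v m)
      have hvyA : ∀ (a : A) (m : M), (v ∘ₗ y) (a • m) = a • (v ∘ₗ y) m := by
        intro a m
        rw [LinearMap.comp_apply, LinearMap.comp_apply, hyA, hvA]
      have hvyD : ∀ g : G, ∀ m ∈ ℳ g, (v ∘ₗ y) m ∈ ℳ g :=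
        fun g m hm => hvD g _ (hyD g m hm)
      rcases dich (v ∘ₗ y) hvyA hvyD with hb | hnvy
      · have hyinj : Function.Injective ⇑y := by
          intro m1 m2 h12
          apply hb.injective
          show v (y m1) = v (y m2)
          rw [h12]
        exact nil_inj y hyN hyinj
      · have honemin : (v ∘ₗ x) = 1 - (v ∘ₗ y) := by
          have hsum : (v ∘ₗ x) + (v ∘ₗ y) = 1 := by
            ext m
            show v (x m) + v (y m) = m
            rw [← map_add]
            exact hv1 m
          exact eq_sub_of_add_eq hsum
        have hunit : IsUnit (v ∘ₗ x) := by
          rw [honemin]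
          exact hnvy.isUnit_one_sub
        have hxb : Function.Bijective ⇑(v ∘ₗ x) := (Module.End.isUnit_iff _).mp hunit
        have hxinj : Function.Injective ⇑x := by
          intro m1 m2 h12
          apply hxb.injective
          show v (x m1) = v (x m2)
          rw [h12]
        exact nil_inj x hxN hxinj
    have hsum1 : (∑ σ : G, u σ) = (1 : Module.End k M) := by
      ext m
      rw [LinearMap.sum_apply, husum m]
      rfl
    have hpsum : p (∑ σ : G, u σ) :=
      Finset.sum_induction u p hadd
        ⟨⟨fun a m => by simp, fun g m hm => by
          simpa using Submodule.zero_mem (ℳ g)⟩, ⟨1, by simp⟩⟩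
        (fun σ _ => ⟨⟨huA σ, hudeg σ⟩, hnil σ⟩)
    rw [hsum1] at hpsum
    obtain ⟨j, hj⟩ := hpsum.2
    rw [one_pow] at hj
    obtain ⟨a, b, hab⟩ := hnontriv
    apply hab
    calc a = (1 : Module.End k M) a := rfl
      _ = (0 : Module.End k M) a := by rw [hj]
      _ = (0 : Module.End k M) b := by simp
      _ = (1 : Module.End k M) b := by rw [hj]
      _ = b := rfl
  obtain ⟨σ, hbij⟩ := hexists
  have hFinj : Function.Injective ⇑(F σ) := by
    intro m1 m2 h12
    apply hbij.injective
    show Gc σ (F σ m1) = Gc σ (F σ m2)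
    rw [h12]
  have hfr : Module.finrank k M = Module.finrank k N :=
    (f.restrictScalars k).finrank_eq
  have hFsurj : Function.Surjective ⇑(F σ) :=
    (LinearMap.injective_iff_surjective_of_finrank_eq_finrank hfr).mp hFinj
  have hFA : ∀ (a : A) (m : M), F σ (a • m) = a • F σ m :=
    fun a m => gcomp_smul 𝒜 hinternal ℳ 𝒩 hMinternal hNinternal hMact hNact fk hfkA σ a m
  set e0 : M ≃ₗ[k] N := LinearEquiv.ofBijective (F σ) ⟨hFinj, hFsurj⟩ with he0
  let e : M ≃ₗ[A] N :=
    { toFun := ⇑(F σ), map_add' := fun x y => map_add _ x y,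
      map_smul' := fun a m => hFA a m, invFun := ⇑e0.symm,
      left_inv := fun m => e0.symm_apply_apply m,
      right_inv := fun nn => e0.apply_symm_apply nn }
  refine ⟨σ, e, ?_⟩
  intro g m hm
  show F σ m ∈ 𝒩 (g * σ)
  exact gcomp_mem ℳ 𝒩 hMinternal hNinternal fk σ hm
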